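/- Assume f = max A = b−1 and let s be a complex number with Re s > log N / log b. With F_s(m) = m^s Σ_{l=−∞}^{∞} γ_B(−b^{−l} m) e^{−m b^{−l}} b^{−ls}, the difference between m^s e^{−m} E(m) and F_s(m) is exponentially small: there exist constants C < ∞ and c > 0 such that |m^s e^{−m} E(m) − F_s(m)| ≤ C e^{−cm} for all real m ≥ 1. -/

import Mathlib

open Finset

noncomputable section

/-- The rational point a₁/b + ⋯ + a_l/b^l attached to a digit tuple. -/
def digitVal (b l : ℕ) (a : Fin l → ℕ) : ℝ :=
  ∑ i : Fin l, (a i : ℝ) / (b : ℝ) ^ ((i : ℕ) + 1)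

/-- The finset of digit tuples of length l with entries in A. -/
def tuples (A : Finset ℕ) (l : ℕ) : Finset (Fin l → ℕ) :=
  Fintype.piFinset fun _ => A

/-- E(t) = 1 + Σ_{l≥1} Σ_{(a₁,…,a_l)∈A^l} e^{t(a₁/b+⋯+a_l/b^l)} b^{−ls}. -/
def egf (b : ℕ) (A : Finset ℕ) (s : ℂ) (t : ℝ) : ℂ :=
  ∑' l : ℕ, ∑ a ∈ tuples A l, ((Real.exp (t * digitVal b l a) : ℝ) : ℂ) * (b : ℂ) ^ (-(l : ℂ) * s)

/-- α_B(t) = Σ_{d∈B} e^{dt}. -/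
def alphaB (B : Finset ℕ) (t : ℝ) : ℝ := ∑ d ∈ B, Real.exp (d * t)

/-- γ_B(−t) = Π_{i≥0} α_B(−b^i t), as a function of t. -/
def gammaNeg (b : ℕ) (B : Finset ℕ) (t : ℝ) : ℝ := ∏' i : ℕ, alphaB B (-((b : ℝ) ^ i * t))

/-- F_s(m) = m^s Σ_{l∈ℤ} γ_B(−b^{−l}m) e^{−mb^{−l}} b^{−ls}. -/
def Fs (b : ℕ) (B : Finset ℕ) (s : ℂ) (m : ℝ) : ℂ :=
  (m : ℂ) ^ s * ∑' l : ℤ,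
    ((gammaNeg b B ((b : ℝ) ^ (-l) * m) : ℝ) : ℂ) *
      ((Real.exp (-(m * (b : ℝ) ^ (-l))) : ℝ) : ℂ) * (b : ℂ) ^ (-(l : ℂ) * s)

namespace EgfAux

open Real Filter


/-! ### Basic facts about `alphaB` -/

lemma alphaB_pos {B : Finset ℕ} (hB : B.Nonempty) (v : ℝ) : 0 < alphaB B v :=
  Finset.sum_pos (fun d _ => Real.exp_pos _) hB

lemma one_le_alphaB {B : Finset ℕ} (hB0 : 0 ∈ B) (v : ℝ) : 1 ≤ alphaB B v := by
  have := Finset.single_le_sum (f := fun d : ℕ => Real.exp (d * v))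
    (fun d _ => (Real.exp_pos _).le) hB0
  simpa [alphaB] using this

lemma alphaB_neg_le_one_add {B : Finset ℕ} (hB0 : 0 ∈ B) {v : ℝ} (hv : 0 ≤ v) :
    alphaB B (-v) ≤ 1 + B.card * Real.exp (-v) := by
  rw [alphaB, ← Finset.add_sum_erase _ _ hB0]
  have h1 : Real.exp ((0 : ℕ) * (-v)) = 1 := by simp
  rw [h1]
  gcongr
  calc ∑ d ∈ B.erase 0, Real.exp (d * (-v))
      ≤ ∑ _d ∈ B.erase 0, Real.exp (-v) := by
        refine Finset.sum_le_sum fun d hd => ?_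
        have hd0 : d ≠ 0 := Finset.ne_of_mem_erase hd
        have h1d : (1:ℝ) ≤ d := by exact_mod_cast Nat.one_le_iff_ne_zero.2 hd0
        apply Real.exp_le_exp.2
        nlinarith
    _ = (B.erase 0).card * Real.exp (-v) := by rw [Finset.sum_const, nsmul_eq_mul]
    _ ≤ B.card * Real.exp (-v) := by
        have := Finset.card_le_card (Finset.erase_subset 0 B)
        have h' : ((B.erase 0).card : ℝ) ≤ B.card := by exact_mod_cast this
        have : (0:ℝ) ≤ Real.exp (-v) := (Real.exp_pos _).le
        nlinarith

lemma alphaB_neg_le_card {B : Finset ℕ} {v : ℝ} (hv : 0 ≤ v) :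
    alphaB B (-v) ≤ B.card := by
  calc alphaB B (-v) ≤ ∑ _d ∈ B, (1:ℝ) := by
        refine Finset.sum_le_sum fun d hd => ?_
        rw [← Real.exp_zero]
        apply Real.exp_le_exp.2
        have : (0:ℝ) ≤ d := Nat.cast_nonneg d
        nlinarith
    _ = B.card := by simp

lemma log_alphaB_nonneg {B : Finset ℕ} (hB0 : 0 ∈ B) (v : ℝ) :
    0 ≤ Real.log (alphaB B v) :=
  Real.log_nonneg (one_le_alphaB hB0 v)

lemma log_alphaB_le {B : Finset ℕ} (hB0 : 0 ∈ B) {v : ℝ} (hv : 0 ≤ v) :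
    Real.log (alphaB B (-v)) ≤ B.card * Real.exp (-v) := by
  have h1 : Real.log (alphaB B (-v)) ≤ alphaB B (-v) - 1 :=
    Real.log_le_sub_one_of_pos (alphaB_pos ⟨0, hB0⟩ _)
  have h2 := alphaB_neg_le_one_add hB0 hv
  linarith



/-! ### `alphaB` of the reflected digit set -/

lemma alphaB_image_eq {b : ℕ} {A : Finset ℕ} (hb : 2 ≤ b) (hAb : A ⊆ Finset.range b) (v : ℝ) :
    alphaB (A.image fun a => b - 1 - a) v = ∑ x ∈ A, Real.exp (((b:ℝ) - 1 - x) * v) := by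
  rw [alphaB, Finset.sum_image]
  · refine Finset.sum_congr rfl fun x hx => ?_
    have hx' : x < b := Finset.mem_range.1 (hAb hx)
    congr 1
    have h1 : ((b - 1 - x : ℕ) : ℝ) = (b:ℝ) - 1 - x := by
      have hb1 : (1:ℕ) ≤ b := by omega
      have hxb : x ≤ b - 1 := by omega
      rw [Nat.cast_sub hxb, Nat.cast_sub hb1]
      norm_num
    rw [h1]
  · intro x hx y hy hxy
    have hx' : x < b := Finset.mem_range.1 (hAb hx)
    have hy' : y < b := Finset.mem_range.1 (hAb hy)
    simp only at hxy
    omega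

/-! ### Geometric sum -/

lemma geom_sum_eq (b : ℕ) (hb : 2 ≤ b) (l : ℕ) :
    ∑ j ∈ Finset.range l, ((b:ℝ) - 1) / (b:ℝ) ^ (j + 1) = 1 - 1 / (b:ℝ) ^ l := by
  have hb0 : (b:ℝ) ≠ 0 := by positivity
  induction l with
  | zero => simp
  | succ n ih =>
    rw [Finset.sum_range_succ, ih]
    have hpn : (b:ℝ) ^ n ≠ 0 := pow_ne_zero _ hb0
    have hpn1 : (b:ℝ) ^ (n+1) ≠ 0 := pow_ne_zero _ hb0
    field_simp
    ring

/-! ### The key product identity -/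

lemma key_identity {b : ℕ} {A : Finset ℕ} (hb : 2 ≤ b) (hAb : A ⊆ Finset.range b) (l : ℕ) (m : ℝ) :
    ∑ a ∈ tuples A l, Real.exp (m * digitVal b l a)
      = Real.exp (m - m / (b:ℝ) ^ l) *
        ∏ j ∈ Finset.range l, alphaB (A.image fun a => b - 1 - a) (-(m / (b:ℝ) ^ (j + 1))) := by
  have hb0 : (0:ℝ) < (b:ℝ) := by positivity
  -- step 1: expand exp of digitVal as a product
  have h1 : ∀ a : Fin l → ℕ, Real.exp (m * digitVal b l a)
      = ∏ i : Fin l, Real.exp (m * (a i : ℝ) / (b:ℝ) ^ ((i:ℕ) + 1)) := by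
    intro a
    rw [← Real.exp_sum, digitVal, Finset.mul_sum]
    congr 1
    refine Finset.sum_congr rfl fun i _ => ?_
    ring
  calc ∑ a ∈ tuples A l, Real.exp (m * digitVal b l a)
      = ∑ a ∈ tuples A l, ∏ i : Fin l, Real.exp (m * (a i : ℝ) / (b:ℝ) ^ ((i:ℕ) + 1)) :=
        Finset.sum_congr rfl fun a _ => h1 a
    _ = ∏ i : Fin l, ∑ x ∈ A, Real.exp (m * (x : ℝ) / (b:ℝ) ^ ((i:ℕ) + 1)) := by
        rw [tuples]
        exact Finset.sum_prod_piFinset A (fun (i : Fin l) (x : ℕ) => Real.exp (m * (x : ℝ) / (b:ℝ) ^ ((i:ℕ) + 1)))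
    _ = ∏ i : Fin l, (Real.exp (m * ((b:ℝ) - 1) / (b:ℝ) ^ ((i:ℕ) + 1)) *
          alphaB (A.image fun a => b - 1 - a) (-(m / (b:ℝ) ^ ((i:ℕ) + 1)))) := by
        refine Finset.prod_congr rfl fun i _ => ?_
        rw [alphaB_image_eq hb hAb, Finset.mul_sum]
        refine Finset.sum_congr rfl fun x _ => ?_
        rw [← Real.exp_add]
        congr 1
        field_simp
        ring
    _ = Real.exp (m - m / (b:ℝ) ^ l) *
        ∏ j ∈ Finset.range l, alphaB (A.image fun a => b - 1 - a) (-(m / (b:ℝ) ^ (j + 1))) := by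
        rw [Finset.prod_mul_distrib, ← Real.exp_sum]
        congr 1
        · congr 1
          rw [Fin.sum_univ_eq_sum_range (fun i => m * ((b:ℝ) - 1) / (b:ℝ) ^ (i + 1))]
          have := geom_sum_eq b hb l
          calc ∑ j ∈ Finset.range l, m * ((b:ℝ) - 1) / (b:ℝ) ^ (j + 1)
              = m * ∑ j ∈ Finset.range l, ((b:ℝ) - 1) / (b:ℝ) ^ (j + 1) := by
                rw [Finset.mul_sum]; exact Finset.sum_congr rfl fun j _ => by ring
            _ = m * (1 - 1 / (b:ℝ) ^ l) := by rw [this]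
            _ = m - m / (b:ℝ) ^ l := by ring
        · exact Fin.prod_univ_eq_prod_range
            (fun i => alphaB (A.image fun a => b - 1 - a) (-(m / (b:ℝ) ^ (i + 1)))) l




lemma summable_log_alphaB {b : ℕ} {B : Finset ℕ} (hb : 2 ≤ b) (hB0 : 0 ∈ B)
    {t : ℝ} (ht : 0 < t) :
    Summable (fun i : ℕ => Real.log (alphaB B (-((b:ℝ) ^ i * t)))) := by
  have hgeo : Summable (fun i : ℕ => (B.card : ℝ) * Real.exp (-t) ^ i) :=
    (summable_geometric_of_lt_one (Real.exp_pos _).le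
      (Real.exp_lt_one_iff.2 (by linarith))).mul_left _
  refine Summable.of_nonneg_of_le (fun i => log_alphaB_nonneg hB0 _) (fun i => ?_) hgeo
  have hbi : (0:ℝ) ≤ (b:ℝ) ^ i * t := by positivity
  refine (log_alphaB_le hB0 hbi).trans ?_
  have h1 : Real.exp (-((b:ℝ) ^ i * t)) ≤ Real.exp (-t) ^ i := by
    rw [← Real.exp_nat_mul]
    apply Real.exp_le_exp.2
    have hip : (i : ℝ) ≤ (b:ℝ) ^ i := by
      have := Nat.lt_pow_self (by omega : 1 < b) (n := i)
      have : (i : ℝ) < (b:ℕ) ^ i := by exact_mod_cast this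
      push_cast at this ⊢
      linarith
    nlinarith
  have : (0:ℝ) ≤ (B.card : ℝ) := Nat.cast_nonneg _
  nlinarith [Real.exp_pos (-((b:ℝ) ^ i * t))]

lemma gammaNeg_eq_exp_tsum {b : ℕ} {B : Finset ℕ} (hb : 2 ≤ b) (hB0 : 0 ∈ B)
    {t : ℝ} (ht : 0 < t) :
    gammaNeg b B t = Real.exp (∑' i : ℕ, Real.log (alphaB B (-((b:ℝ) ^ i * t)))) := by
  have h := Real.rexp_tsum_eq_tprod
    (f := fun (i : ℕ) => alphaB B (-((b:ℝ) ^ i * t)))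
    (fun n => alphaB_pos ⟨0, hB0⟩ _)
    (summable_log_alphaB hb hB0 ht)
  have h2 := h
  simpa [gammaNeg] using h2.symm

lemma one_le_gammaNeg {b : ℕ} {B : Finset ℕ} (hb : 2 ≤ b) (hB0 : 0 ∈ B)
    {t : ℝ} (ht : 0 < t) : 1 ≤ gammaNeg b B t := by
  rw [gammaNeg_eq_exp_tsum hb hB0 ht, ← Real.exp_zero]
  apply Real.exp_le_exp.2
  exact tsum_nonneg (fun i => log_alphaB_nonneg hB0 _)

lemma tsum_log_alphaB_le {b : ℕ} {B : Finset ℕ} (hb : 2 ≤ b) (hB0 : 0 ∈ B)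
    {t : ℝ} (ht : 1 ≤ t) :
    (∑' i : ℕ, Real.log (alphaB B (-((b:ℝ) ^ i * t)))) ≤ 2 * B.card * Real.exp (-t) := by
  have ht0 : 0 < t := by linarith
  have hsum := summable_log_alphaB hb hB0 (B := B) ht0
  have hgeo : Summable (fun i : ℕ => (B.card : ℝ) * Real.exp (-t) * Real.exp (-1) ^ i) :=
    (summable_geometric_of_lt_one (Real.exp_pos _).le
      (Real.exp_lt_one_iff.2 (by norm_num))).mul_left _
  have hle : ∀ i : ℕ, Real.log (alphaB B (-((b:ℝ) ^ i * t)))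
      ≤ (B.card : ℝ) * Real.exp (-t) * Real.exp (-1) ^ i := by
    intro i
    have hbi : (0:ℝ) ≤ (b:ℝ) ^ i * t := by positivity
    refine (log_alphaB_le hB0 hbi).trans ?_
    have h1 : Real.exp (-((b:ℝ) ^ i * t)) ≤ Real.exp (-t) * Real.exp (-1) ^ i := by
      rw [← Real.exp_nat_mul, ← Real.exp_add]
      apply Real.exp_le_exp.2
      have hip : (i : ℝ) + 1 ≤ (b:ℝ) ^ i := by
        have h := Nat.lt_pow_self (by omega : 1 < b) (n := i)
        have : (i : ℝ) < (b:ℕ) ^ i := by exact_mod_cast h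
        push_cast at this ⊢
        have : ((i : ℝ) + 1) ≤ (b:ℝ) ^ i := by
          have h2 : ((i + 1 : ℕ) : ℝ) ≤ ((b ^ i : ℕ) : ℝ) := by exact_mod_cast h
          push_cast at h2
          linarith
        linarith
      nlinarith
    have hc : (0:ℝ) ≤ (B.card : ℝ) := Nat.cast_nonneg _
    nlinarith [Real.exp_pos (-((b:ℝ) ^ i * t)), Real.exp_pos (-t),
      pow_pos (Real.exp_pos (-1)) i]
  calc (∑' i : ℕ, Real.log (alphaB B (-((b:ℝ) ^ i * t))))
      ≤ ∑' i : ℕ, (B.card : ℝ) * Real.exp (-t) * Real.exp (-1) ^ i :=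
        Summable.tsum_le_tsum hle hsum hgeo
    _ = (B.card : ℝ) * Real.exp (-t) * (1 - Real.exp (-1))⁻¹ := by
        rw [tsum_mul_left, tsum_geometric_of_lt_one (Real.exp_pos _).le
          (Real.exp_lt_one_iff.2 (by norm_num))]
    _ ≤ 2 * B.card * Real.exp (-t) := by
        have he : Real.exp (-1) ≤ 1/2 := by
          rw [Real.exp_neg]
          rw [inv_le_comm₀ (Real.exp_pos 1) (by norm_num)]
          have := Real.add_one_le_exp 1
          linarith
        have h2 : (1 - Real.exp (-1))⁻¹ ≤ 2 := by
          rw [inv_le_comm₀ (by linarith [Real.exp_pos (-1)] : (0:ℝ) < 1 - Real.exp (-1)) (by norm_num)]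
          linarith
        have hc : (0:ℝ) ≤ (B.card : ℝ) := Nat.cast_nonneg _
        nlinarith [mul_le_mul_of_nonneg_left h2 (mul_nonneg hc (Real.exp_pos (-t)).le)]




-- the split identity




lemma gammaNeg_split {b : ℕ} {B : Finset ℕ} (hb : 2 ≤ b) (hB0 : 0 ∈ B)
    {m : ℝ} (hm : 0 < m) (n : ℕ) :
    gammaNeg b B (m / (b:ℝ) ^ n)
      = (∏ j ∈ Finset.range n, alphaB B (-(m / (b:ℝ) ^ (j + 1)))) * gammaNeg b B m := by
  have hbp : (0:ℝ) < (b:ℝ) := by positivity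
  have hbne : (b:ℝ) ≠ 0 := ne_of_gt hbp
  have htn : 0 < m / (b:ℝ) ^ n := by positivity
  set L : ℕ → ℝ := fun i => Real.log (alphaB B (-((b:ℝ) ^ i * (m / (b:ℝ) ^ n)))) with hL
  have hsum : Summable L := summable_log_alphaB hb hB0 htn
  have hshift : ∀ i : ℕ, L (i + n) = Real.log (alphaB B (-((b:ℝ) ^ i * m))) := by
    intro i
    simp only [hL]
    congr 3
    rw [pow_add]
    field_simp
  have hsplit := Summable.sum_add_tsum_nat_add n hsum
  rw [gammaNeg_eq_exp_tsum hb hB0 htn]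
  rw [show (∑' i : ℕ, Real.log (alphaB B (-((b:ℝ) ^ i * (m / (b:ℝ) ^ n))))) = ∑' i, L i from rfl]
  rw [← hsplit, Real.exp_add, Real.exp_sum]
  congr 1
  · -- product part
    have hstep : ∀ i ∈ Finset.range n,
        Real.exp (L i) = alphaB B (-(m / (b:ℝ) ^ (n - 1 - i + 1))) := by
      intro i hi
      have hin : i < n := Finset.mem_range.1 hi
      have harg : (b:ℝ) ^ i * (m / (b:ℝ) ^ n) = m / (b:ℝ) ^ (n - 1 - i + 1) := by
        have hexp : n - 1 - i + 1 + i = n := by omega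
        have hbn : ((b:ℝ) ^ n) = (b:ℝ) ^ (n - 1 - i + 1) * (b:ℝ) ^ i := by
          rw [← pow_add]; congr 1; omega
        rw [hbn]
        field_simp
      rw [hL]
      simp only []
      rw [harg, Real.exp_log (alphaB_pos ⟨0, hB0⟩ _)]
    calc ∏ i ∈ Finset.range n, Real.exp (L i)
        = ∏ i ∈ Finset.range n, alphaB B (-(m / (b:ℝ) ^ (n - 1 - i + 1))) :=
          Finset.prod_congr rfl hstep
      _ = ∏ j ∈ Finset.range n, alphaB B (-(m / (b:ℝ) ^ (j + 1))) :=
          Finset.prod_range_reflect (fun j => alphaB B (-(m / (b:ℝ) ^ (j + 1)))) n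
  · rw [gammaNeg_eq_exp_tsum hb hB0 hm]
    exact congrArg Real.exp (tsum_congr hshift)





lemma rho_summable (b : ℕ) (hb : 2 ≤ b) (σ : ℝ) :
    Summable (fun k : ℕ => Real.exp (1 - (b:ℝ) ^ (k + 1)) * (b:ℝ) ^ (((k:ℝ) + 1) * σ)) := by
  have hbp : (1:ℝ) < (b:ℝ) := by
    have : (2:ℝ) ≤ (b:ℝ) := by exact_mod_cast hb
    linarith
  have hb2 : (2:ℝ) ≤ (b:ℝ) := by exact_mod_cast hb
  have hb0 : (0:ℝ) < (b:ℝ) := by linarith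
  refine summable_of_ratio_norm_eventually_le (r := 1/2) (by norm_num) ?_
  filter_upwards [Filter.eventually_ge_atTop ⌈σ * Real.log b⌉₊] with k hk
  have hρpos : ∀ j : ℕ, 0 < Real.exp (1 - (b:ℝ) ^ (j + 1)) * (b:ℝ) ^ (((j:ℝ) + 1) * σ) := by
    intro j; positivity
  rw [Real.norm_of_nonneg (hρpos (k+1)).le, Real.norm_of_nonneg (hρpos k).le]
  have hkey : Real.exp (1 - (b:ℝ) ^ (k + 1 + 1)) * (b:ℝ) ^ ((((k:ℕ)+1:ℝ) + 1) * σ)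
      = (Real.exp ((b:ℝ) ^ (k+1) - (b:ℝ) ^ (k+2)) * (b:ℝ) ^ σ)
        * (Real.exp (1 - (b:ℝ) ^ (k + 1)) * (b:ℝ) ^ (((k:ℝ) + 1) * σ)) := by
    rw [show (((k:ℕ)+1:ℝ) + 1) * σ = ((k:ℝ) + 1) * σ + σ by push_cast; ring,
      Real.rpow_add hb0]
    calc rexp (1 - (b:ℝ) ^ (k + 1 + 1)) * ((b:ℝ) ^ (((k:ℝ) + 1) * σ) * (b:ℝ) ^ σ)
        = (rexp ((b:ℝ) ^ (k+1) - (b:ℝ) ^ (k+2)) * rexp (1 - (b:ℝ) ^ (k + 1)))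
            * ((b:ℝ) ^ (((k:ℝ) + 1) * σ) * (b:ℝ) ^ σ) := by
          rw [← Real.exp_add]
          congr 1
          ring
      _ = (rexp ((b:ℝ) ^ (k+1) - (b:ℝ) ^ (k+2)) * (b:ℝ) ^ σ)
            * (rexp (1 - (b:ℝ) ^ (k + 1)) * (b:ℝ) ^ (((k:ℝ) + 1) * σ)) := by ring
  push_cast at hkey ⊢
  rw [hkey]
  have hfac : Real.exp ((b:ℝ) ^ (k+1) - (b:ℝ) ^ (k+2)) * (b:ℝ) ^ σ ≤ 1/2 := by
    rw [show (b:ℝ) ^ σ = Real.exp (σ * Real.log b) from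
      (Real.rpow_def_of_pos hb0 σ).trans (by rw [mul_comm]),
      ← Real.exp_add]
    have hhalf : Real.exp (-1) ≤ 1/2 := by
      rw [Real.exp_neg, inv_le_comm₀ (Real.exp_pos 1) (by norm_num)]
      linarith [Real.add_one_le_exp 1]
    refine le_trans ?_ hhalf
    apply Real.exp_le_exp.2
    have h1 : σ * Real.log b ≤ (k : ℝ) := by
      calc σ * Real.log b ≤ (⌈σ * Real.log b⌉₊ : ℝ) := Nat.le_ceil _
        _ ≤ (k : ℝ) := by exact_mod_cast hk
    have h2 : (k:ℝ) + 2 ≤ (b:ℝ) ^ (k + 1) := by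
      have h := Nat.lt_pow_self (by omega : 1 < b) (n := k + 1)
      have h' : ((k + 2 : ℕ) : ℝ) ≤ ((b ^ (k+1) : ℕ) : ℝ) := by exact_mod_cast h
      push_cast at h'
      linarith
    have h3 : (b:ℝ) ^ (k + 2) = (b:ℝ) ^ (k+1) * b := by ring
    have h4 : (b:ℝ) ^ (k+1) ≤ (b:ℝ) ^ (k+1) * ((b:ℝ) - 1) := by
      nlinarith [pow_pos hb0 (k+1), mul_nonneg (pow_pos hb0 (k+1)).le
        (show (0:ℝ) ≤ (b:ℝ) - 2 by linarith)]
    nlinarith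
  have hρk := (hρpos k).le
  nlinarith [hρpos k]

lemma rpow_mul_exp_neg_le (σ : ℝ) :
    ∃ D : ℝ, 0 < D ∧ ∀ m : ℝ, 1 ≤ m → m ^ σ * Real.exp (-m) ≤ D * Real.exp (-(2⁻¹ * m)) := by
  set k := ⌈σ⌉₊ with hk
  refine ⟨2 ^ k * (Nat.factorial k), by positivity, fun m hm => ?_⟩
  have hm0 : (0:ℝ) < m := by linarith
  have h1 : m ^ σ ≤ m ^ (k : ℕ) := by
    rw [← Real.rpow_natCast m k]
    exact Real.rpow_le_rpow_of_exponent_le hm (Nat.le_ceil σ)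
  have h2 : m ^ (k:ℕ) ≤ 2 ^ k * (Nat.factorial k) * Real.exp (2⁻¹ * m) := by
    have hp := Real.pow_div_factorial_le_exp (m / 2) (by linarith : (0:ℝ) ≤ m / 2) k
    have hfac : (0:ℝ) < (Nat.factorial k : ℝ) := by positivity
    have hmk : m ^ (k:ℕ) = 2 ^ k * (m / 2) ^ k := by
      rw [← mul_pow]
      congr 1
      ring
    rw [hmk]
    rw [div_le_iff₀ hfac] at hp
    have hexp : Real.exp (m / 2) = Real.exp (2⁻¹ * m) := by rw [show m / 2 = 2⁻¹ * m by ring]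
    calc (2:ℝ) ^ k * (m / 2) ^ k ≤ 2 ^ k * (Real.exp (m / 2) * (Nat.factorial k)) :=
          mul_le_mul_of_nonneg_left hp (by positivity)
      _ = 2 ^ k * (Nat.factorial k) * Real.exp (2⁻¹ * m) := by rw [hexp]; ring
  have h3 : Real.exp (2⁻¹ * m) * Real.exp (-m) = Real.exp (-(2⁻¹ * m)) := by
    rw [← Real.exp_add]; ring_nf
  calc m ^ σ * Real.exp (-m) ≤ (2 ^ k * (Nat.factorial k) * Real.exp (2⁻¹ * m)) * Real.exp (-m) := by
        have := Real.exp_pos (-m)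
        nlinarith [Real.rpow_nonneg hm0.le σ, h1.trans h2]
    _ = 2 ^ k * (Nat.factorial k) * Real.exp (-(2⁻¹ * m)) := by rw [mul_assoc, h3]


end EgfAux

open EgfAux Real

set_option maxHeartbeats 1000000

/-- Assume max A = b−1, Re s > log N / log b.  Then m^s e^{−m} E(m)
differs from F_s(m) by an exponentially small quantity: there exist C < ∞ and c > 0
with |m^s e^{−m} E(m) − F_s(m)| ≤ C e^{−cm} for all m ≥ 1. -/
theorem egf_exponentially_close_to_Fs
    (b : ℕ) (hb : 2 ≤ b) (A : Finset ℕ) (hA : A.Nonempty) (hAb : A ⊆ Finset.range b)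
    (hbA : b - 1 ∈ A)
    (s : ℂ) (hs : Real.log A.card / Real.log b < s.re) :
    ∃ C c : ℝ, 0 < c ∧ ∀ m : ℝ, 1 ≤ m →
      ‖(m : ℂ) ^ s * ((Real.exp (-m) : ℝ) : ℂ) * egf b A s m
          - Fs b (A.image fun a => b - 1 - a) s m‖
        ≤ C * Real.exp (-(c * m)) := by
  classical
  set B : Finset ℕ := A.image (fun a => b - 1 - a) with hBdef
  have hB0 : 0 ∈ B := Finset.mem_image.2 ⟨b - 1, hbA, by omega⟩
  have hBne : B.Nonempty := ⟨0, hB0⟩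
  set N : ℕ := A.card with hNdef
  have hN1 : 1 ≤ N := Finset.card_pos.2 hA
  have hBcard : B.card ≤ N := Finset.card_image_le
  set σ : ℝ := s.re with hσdef
  have hb2 : (2:ℝ) ≤ (b:ℝ) := by exact_mod_cast hb
  have hb1 : (1:ℝ) < (b:ℝ) := by linarith
  have hb0 : (0:ℝ) < (b:ℝ) := by linarith
  have hlogb : 0 < Real.log b := Real.log_pos hb1
  have hN0 : (0:ℝ) < (N:ℝ) := by exact_mod_cast hN1
  have hNb : (N:ℝ) < (b:ℝ) ^ σ := by
    have h1 : Real.log N < σ * Real.log b := by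
      rw [div_lt_iff₀ hlogb] at hs
      exact hs
    calc (N:ℝ) = Real.exp (Real.log N) := (Real.exp_log hN0).symm
      _ < Real.exp (σ * Real.log b) := Real.exp_lt_exp.2 h1
      _ = (b:ℝ) ^ σ := by rw [Real.rpow_def_of_pos hb0, mul_comm]
  have hbσpos : 0 < (b:ℝ) ^ σ := Real.rpow_pos_of_pos hb0 σ
  set q : ℝ := (N:ℝ) * (b:ℝ) ^ (-σ) with hqdef
  have hq0 : 0 ≤ q := by positivity
  have hqeq : q = (N:ℝ) / (b:ℝ) ^ σ := by
    rw [hqdef, Real.rpow_neg hb0.le, div_eq_mul_inv]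
  have hq1 : q < 1 := by
    rw [hqeq]
    exact (div_lt_one hbσpos).2 hNb
  have hinvq : 0 ≤ (1 - q)⁻¹ := by
    have : 0 < 1 - q := by linarith
    positivity
  -- constants
  set K : ℝ := Real.exp (2 * N) with hKdef
  have hK0 : 0 < K := Real.exp_pos _
  set K' : ℝ := 2 * N * Real.exp (2 * N) with hK'def
  have hK'0 : 0 ≤ K' := by positivity
  set ρ : ℕ → ℝ := fun k => Real.exp (1 - (b:ℝ) ^ (k + 1)) * (b:ℝ) ^ (((k:ℝ) + 1) * σ) with hρdef
  have hρsum : Summable ρ := rho_summable b hb σ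
  have hρ0 : ∀ k, 0 ≤ ρ k := fun k => by rw [hρdef]; positivity
  set κ : ℝ := ∑' k, ρ k with hκdef
  have hκ0 : 0 ≤ κ := tsum_nonneg hρ0
  obtain ⟨D, hD0, hD⟩ := rpow_mul_exp_neg_le σ
  refine ⟨(K' * (1 - q)⁻¹ + K * κ) * D, 2⁻¹, by norm_num, fun m hm => ?_⟩
  have hm0 : (0:ℝ) < m := by linarith
  -- gamma bounds at arguments t ≥ 1
  have hγ_le : ∀ t : ℝ, 1 ≤ t → gammaNeg b B t ≤ Real.exp (2 * N * Real.exp (-t)) := by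
    intro t ht
    have ht0 : 0 < t := by linarith
    rw [gammaNeg_eq_exp_tsum hb hB0 ht0]
    apply Real.exp_le_exp.2
    refine (tsum_log_alphaB_le hb hB0 ht).trans ?_
    have : (B.card : ℝ) ≤ (N : ℝ) := by exact_mod_cast hBcard
    nlinarith [Real.exp_pos (-t)]
  have hγ_le_K : ∀ t : ℝ, 1 ≤ t → gammaNeg b B t ≤ K := by
    intro t ht
    refine (hγ_le t ht).trans ?_
    rw [hKdef]
    apply Real.exp_le_exp.2
    have h1 : Real.exp (-t) ≤ 1 := Real.exp_le_one_iff.2 (by linarith)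
    nlinarith
  have hγ1 : ∀ t : ℝ, 0 < t → 1 ≤ gammaNeg b B t := fun t ht => one_le_gammaNeg hb hB0 ht
  -- the quantities for this m
  set G : ℝ := gammaNeg b B m with hGdef
  have hG1 : 1 ≤ G := hγ1 m hm0
  have hGm : G - 1 ≤ K' * Real.exp (-m) := by
    obtain ⟨x, hx⟩ : ∃ x : ℝ, x = 2 * N * Real.exp (-m) := ⟨_, rfl⟩
    have hx0 : 0 ≤ x := by rw [hx]; positivity
    have hx2N : x ≤ 2 * N := by
      have h1 : Real.exp (-m) ≤ 1 := Real.exp_le_one_iff.2 (by linarith)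
      rw [hx]
      nlinarith
    have h2 : G ≤ Real.exp x := by rw [hx]; exact hγ_le m hm
    have h3 : Real.exp x - 1 ≤ x * Real.exp x := by
      have h4 := Real.add_one_le_exp (-x)
      have h5 : Real.exp (-x) * Real.exp x = 1 := by
        rw [← Real.exp_add]; simp
      nlinarith [Real.exp_pos x]
    have h6 : x * Real.exp x ≤ x * Real.exp (2 * N) := by
      have := Real.exp_le_exp.2 hx2N
      nlinarith [Real.exp_pos x]
    have h7 : x * Real.exp (2 * N) = K' * Real.exp (-m) := by
      rw [hx, hK'def]; ring
    linarith
  -- P, u, w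
  set P : ℕ → ℝ := fun l => ∏ j ∈ Finset.range l, alphaB B (-(m / (b:ℝ) ^ (j + 1))) with hPdef
  have hP0 : ∀ l, 0 ≤ P l := fun l =>
    Finset.prod_nonneg fun j _ => (alphaB_pos hBne _).le
  have hPle : ∀ l, P l ≤ (N:ℝ) ^ l := by
    intro l
    rw [hPdef]
    calc ∏ j ∈ Finset.range l, alphaB B (-(m / (b:ℝ) ^ (j + 1)))
        ≤ ∏ _j ∈ Finset.range l, (N:ℝ) := by
          refine Finset.prod_le_prod (fun j _ => (alphaB_pos hBne _).le) (fun j _ => ?_)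
          refine (alphaB_neg_le_card (by positivity)).trans ?_
          exact_mod_cast hBcard
      _ = (N:ℝ) ^ l := by rw [Finset.prod_const, Finset.card_range]
  set u : ℕ → ℝ := fun l => P l * Real.exp (-(m / (b:ℝ) ^ l)) with hudef
  set w : ℕ → ℂ := fun l => (b:ℂ) ^ (-(l:ℂ) * s) with hwdef
  have hw_norm : ∀ l : ℕ, ‖w l‖ = ((b:ℝ) ^ (-σ)) ^ l := by
    intro l
    rw [hwdef]
    have hcast : (b:ℂ) = ((b:ℝ):ℂ) := by push_cast; rfl
    rw [hcast, Complex.norm_cpow_eq_rpow_re_of_pos hb0]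
    have hre : (-(l:ℂ) * s).re = -σ * l := by
      simp [Complex.mul_re, hσdef]
      ring
    rw [hre, Real.rpow_mul hb0.le, Real.rpow_natCast]
  have hterm_norm : ∀ l : ℕ, ‖(u l : ℂ) * w l‖ ≤ q ^ l := by
    intro l
    rw [norm_mul, Complex.norm_real, hw_norm]
    have hu0 : 0 ≤ u l := mul_nonneg (hP0 l) (Real.exp_pos _).le
    have huN : u l ≤ (N:ℝ) ^ l := by
      have h1 : Real.exp (-(m / (b:ℝ) ^ l)) ≤ 1 := Real.exp_le_one_iff.2
        (neg_nonpos.2 (by positivity))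
      have := hPle l
      rw [hudef]
      nlinarith [hP0 l, pow_nonneg (Nat.cast_nonneg N : (0:ℝ) ≤ N) l]
    rw [Real.norm_of_nonneg hu0, hqdef, mul_pow]
    have hbneg : (0:ℝ) ≤ (b:ℝ) ^ (-σ) := (Real.rpow_pos_of_pos hb0 _).le
    have : (0:ℝ) ≤ ((b:ℝ) ^ (-σ)) ^ l := pow_nonneg hbneg l
    nlinarith
  have hqsum : Summable (fun l : ℕ => q ^ l) := summable_geometric_of_lt_one hq0 hq1
  have hSsum : Summable (fun l : ℕ => (u l : ℂ) * w l) :=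
    Summable.of_norm_bounded hqsum hterm_norm
  set S : ℂ := ∑' l : ℕ, (u l : ℂ) * w l with hSdef
  have hS_norm : ‖S‖ ≤ (1 - q)⁻¹ := by
    rw [hSdef]
    refine (norm_tsum_le_tsum_norm (hSsum.norm)).trans ?_
    refine le_of_le_of_eq (Summable.tsum_le_tsum hterm_norm hSsum.norm hqsum) ?_
    exact tsum_geometric_of_lt_one hq0 hq1
  -- Step A : e^{-m} * egf = S
  have hstepA : ((Real.exp (-m) : ℝ) : ℂ) * egf b A s m = S := by
    rw [egf, ← tsum_mul_left, hSdef]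
    refine tsum_congr fun l => ?_
    have hsum_pull : ∑ a ∈ tuples A l, ((Real.exp (m * digitVal b l a) : ℝ) : ℂ) * (b:ℂ) ^ (-(l:ℂ) * s)
        = (((∑ a ∈ tuples A l, Real.exp (m * digitVal b l a)) : ℝ) : ℂ) * w l := by
      rw [← Finset.sum_mul, hwdef]
      push_cast
      rfl
    rw [hsum_pull, key_identity hb hAb l m]
    have hre : Real.exp (-m) * (Real.exp (m - m / (b:ℝ) ^ l) *
        ∏ j ∈ Finset.range l, alphaB B (-(m / (b:ℝ) ^ (j + 1)))) = u l := by
      rw [← mul_assoc, ← Real.exp_add,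
        show -m + (m - m / (b:ℝ) ^ l) = -(m / (b:ℝ) ^ l) by ring, hudef, hPdef]
      exact mul_comm _ _
    calc ((Real.exp (-m) : ℝ) : ℂ) *
          ((((Real.exp (m - m / (b:ℝ) ^ l) *
            ∏ j ∈ Finset.range l, alphaB B (-(m / (b:ℝ) ^ (j + 1)))) : ℝ) : ℂ) * w l)
        = (((Real.exp (-m) * (Real.exp (m - m / (b:ℝ) ^ l) *
            ∏ j ∈ Finset.range l, alphaB B (-(m / (b:ℝ) ^ (j + 1))))) : ℝ) : ℂ) * w l := by
          push_cast
          ring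
      _ = (u l : ℂ) * w l := by rw [hre]
  -- the ℤ-indexed function
  set h : ℤ → ℂ := fun l =>
    ((gammaNeg b B ((b : ℝ) ^ (-l) * m) : ℝ) : ℂ) *
      ((Real.exp (-(m * (b : ℝ) ^ (-l))) : ℝ) : ℂ) * (b : ℂ) ^ (-(l : ℂ) * s) with hhdef
  have hnat : ∀ n : ℕ, h (n : ℤ) = (G : ℂ) * ((u n : ℂ) * w n) := by
    intro n
    rw [hhdef]
    have hz : (b:ℝ) ^ (-(n:ℤ)) = ((b:ℝ) ^ n)⁻¹ := by
      rw [zpow_neg, zpow_natCast]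
    have harg : ((b:ℝ) ^ n)⁻¹ * m = m / (b:ℝ) ^ n := by
      rw [inv_mul_eq_div]
    have hsplit := gammaNeg_split hb hB0 hm0 n
    have hexp : -(m * ((b:ℝ) ^ n)⁻¹) = -(m / (b:ℝ) ^ n) := by
      rw [div_eq_mul_inv]
    have hwn : (b:ℂ) ^ (-((n:ℤ):ℂ) * s) = w n := by
      rw [hwdef]
      norm_num
    simp only [hz, harg, hexp, hwn, hsplit]
    rw [hudef, hPdef, hGdef]
    push_cast
    ring
  have hSpos : HasSum (fun n : ℕ => h (n : ℤ)) ((G : ℂ) * S) := by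
    have := (hSsum.hasSum).mul_left (G : ℂ)
    rw [hSdef]
    refine HasSum.congr_fun this fun n => hnat n
  -- the negative part
  set T : ℕ → ℂ := fun k => h (-((k : ℤ) + 1)) with hTdef
  have hT_norm : ∀ k : ℕ, ‖T k‖ ≤ K * Real.exp (-m) * ρ k := by
    intro k
    simp only [hTdef, hhdef]
    have hz : (b:ℝ) ^ (-(-((k:ℤ) + 1))) = (b:ℝ) ^ (k + 1) := by
      rw [neg_neg]
      norm_cast
    have hargpos : (1:ℝ) ≤ (b:ℝ) ^ (k + 1) * m := by
      have h1 : (1:ℝ) ≤ (b:ℝ) ^ (k + 1) := one_le_pow₀ hb1.le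
      nlinarith
    have hγb : gammaNeg b B ((b:ℝ) ^ (k + 1) * m) ≤ K := hγ_le_K _ hargpos
    have hγb0 : 0 ≤ gammaNeg b B ((b:ℝ) ^ (k + 1) * m) :=
      le_trans zero_le_one (hγ1 _ (by positivity))
    have hwnorm : ‖(b:ℂ) ^ (-((((-((k:ℤ) + 1)) : ℤ)):ℂ) * s)‖ = (b:ℝ) ^ (((k:ℝ) + 1) * σ) := by
      have hcast : (b:ℂ) = ((b:ℝ):ℂ) := by push_cast; rfl
      rw [hcast, Complex.norm_cpow_eq_rpow_re_of_pos hb0]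
      congr 1
      simp only [Complex.mul_re, Complex.neg_re, Complex.neg_im, Complex.intCast_re,
        Complex.intCast_im, neg_zero, zero_mul, sub_zero, hσdef]
      push_cast
      ring
    have hexpb : Real.exp (-(m * (b:ℝ) ^ (k + 1)))
        ≤ Real.exp (-m) * Real.exp (1 - (b:ℝ) ^ (k + 1)) := by
      rw [← Real.exp_add]
      apply Real.exp_le_exp.2
      have h1 : (1:ℝ) ≤ (b:ℝ) ^ (k + 1) := one_le_pow₀ hb1.le
      nlinarith
    rw [hz, norm_mul, norm_mul, Complex.norm_real, Complex.norm_real, hwnorm]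
    rw [Real.norm_of_nonneg hγb0, Real.norm_of_nonneg (Real.exp_pos _).le]
    rw [hρdef]
    have hbk : (0:ℝ) ≤ (b:ℝ) ^ (((k:ℝ) + 1) * σ) := (Real.rpow_pos_of_pos hb0 _).le
    have hγexp : gammaNeg b B ((b:ℝ) ^ (k + 1) * m) * Real.exp (-(m * (b:ℝ) ^ (k + 1)))
        ≤ K * (Real.exp (-m) * Real.exp (1 - (b:ℝ) ^ (k + 1))) := by
      have := Real.exp_pos (-(m * (b:ℝ) ^ (k + 1)))
      nlinarith [Real.exp_pos (-m), Real.exp_pos (1 - (b:ℝ) ^ (k + 1))]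
    calc gammaNeg b B ((b:ℝ) ^ (k + 1) * m) * Real.exp (-(m * (b:ℝ) ^ (k + 1))) *
          (b:ℝ) ^ (((k:ℝ) + 1) * σ)
        ≤ K * (Real.exp (-m) * Real.exp (1 - (b:ℝ) ^ (k + 1))) * (b:ℝ) ^ (((k:ℝ) + 1) * σ) := by
          exact mul_le_mul_of_nonneg_right hγexp hbk
      _ = K * Real.exp (-m) * (Real.exp (1 - (b:ℝ) ^ (k + 1)) * (b:ℝ) ^ (((k:ℝ) + 1) * σ)) := by
          ring
  have hTsum : Summable T :=
    Summable.of_norm_bounded (hρsum.mul_left (K * Real.exp (-m))) hT_norm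
  set Sneg : ℂ := ∑' k, T k with hSnegdef
  have hSnegnorm : ‖Sneg‖ ≤ K * Real.exp (-m) * κ := by
    rw [hSnegdef]
    refine (norm_tsum_le_tsum_norm hTsum.norm).trans ?_
    refine le_of_le_of_eq (Summable.tsum_le_tsum hT_norm hTsum.norm (hρsum.mul_left (K * Real.exp (-m)))) ?_
    rw [tsum_mul_left, hκdef]
  have hZ : HasSum h ((G:ℂ) * S + Sneg) := by
    refine HasSum.of_nat_of_neg_add_one hSpos ?_
    rw [hSnegdef]
    exact hTsum.hasSum
  have hFs : Fs b B s m = (m:ℂ) ^ s * ((G:ℂ) * S + Sneg) := by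
    rw [Fs]
    congr 1
    exact hZ.tsum_eq
  -- assemble
  have hmain : (m : ℂ) ^ s * ((Real.exp (-m) : ℝ) : ℂ) * egf b A s m - Fs b B s m
      = (m:ℂ) ^ s * ((1 - (G:ℂ)) * S - Sneg) := by
    rw [mul_assoc, hstepA, hFs]
    ring
  rw [hmain]
  have hms : ‖(m:ℂ) ^ s‖ = m ^ σ := by
    have hcast : (m:ℂ) = ((m:ℝ):ℂ) := rfl
    rw [hcast, Complex.norm_cpow_eq_rpow_re_of_pos hm0, hσdef]
  have h1G : ‖(1 - (G:ℂ))‖ ≤ K' * Real.exp (-m) := by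
    have : (1 - (G:ℂ)) = (((1 - G : ℝ)) : ℂ) := by push_cast; ring
    rw [this, Complex.norm_real, Real.norm_eq_abs, abs_of_nonpos (by linarith)]
    linarith
  calc ‖(m:ℂ) ^ s * ((1 - (G:ℂ)) * S - Sneg)‖
      = m ^ σ * ‖(1 - (G:ℂ)) * S - Sneg‖ := by rw [norm_mul, hms]
    _ ≤ m ^ σ * (‖(1 - (G:ℂ))‖ * ‖S‖ + ‖Sneg‖) := by
        refine mul_le_mul_of_nonneg_left ?_ (Real.rpow_nonneg hm0.le σ)
        refine (norm_sub_le _ _).trans ?_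
        rw [norm_mul]
    _ ≤ m ^ σ * (K' * Real.exp (-m) * (1 - q)⁻¹ + K * Real.exp (-m) * κ) := by
        refine mul_le_mul_of_nonneg_left ?_ (Real.rpow_nonneg hm0.le σ)
        have hS0 : 0 ≤ ‖S‖ := norm_nonneg _
        have := mul_le_mul h1G hS_norm hS0 (by positivity : (0:ℝ) ≤ K' * Real.exp (-m))
        linarith
    _ = (K' * (1 - q)⁻¹ + K * κ) * (m ^ σ * Real.exp (-m)) := by ring
    _ ≤ (K' * (1 - q)⁻¹ + K * κ) * (D * Real.exp (-(2⁻¹ * m))) := by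
        refine mul_le_mul_of_nonneg_left (hD m hm) ?_
        have : 0 ≤ K' * (1 - q)⁻¹ := mul_nonneg hK'0 hinvq
        nlinarith [hK0.le, hκ0, mul_nonneg hK0.le hκ0]
    _ = (K' * (1 - q)⁻¹ + K * κ) * D * Real.exp (-(2⁻¹ * m)) := by ring
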